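/- In the setting of a p-local finite group (S,F,L) with Γ = Γ_{p'}(F) and H ≤ Γ, the functor δ_P : G_H(P) → Γ/H sending an object (P^α, α) to the coset Θ̂(α)^{-1}H is well defined and is an equivalence of categories, where Γ/H is viewed as a discrete category with object set the left cosets. -/

import Mathlib

open CategoryTheory

/-- Skeletal data of a (quasi)centric linking system of a `p`-local finite group, as used
in [Levi–Ragnarsson]: a small category `L` with distinguished object `S`, the projection
functor `Θ̂ : L ⥤ B(Γ)` onto (the one-object category of) the group `Γ = Γ_{p'}(F)`,
an image factorization of every morphism into an isomorphism followed by an "inclusion"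
(inclusions being collapsed to the identity by `Θ̂`), surjectivity of
`Aut_L(S) → Γ`, and restrictions of automorphisms of `S` to every object. -/
structure LinkingData (L : Type) [SmallCategory L] (Γ : Type) [Group Γ] where
  S : L
  Θ : L ⥤ SingleObj Γ
  im : ∀ {P Q : L}, (P ⟶ Q) → L
  restr : ∀ {P Q : L} (f : P ⟶ Q), P ⟶ im f
  incl : ∀ {P Q : L} (f : P ⟶ Q), im f ⟶ Q
  restr_isIso : ∀ {P Q : L} (f : P ⟶ Q), IsIso (restr f)
  fac : ∀ {P Q : L} (f : P ⟶ Q), restr f ≫ incl f = f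
  theta_incl : ∀ {P Q : L} (f : P ⟶ Q), (show Γ from Θ.map (incl f)) = 1
  im_of_isIso : ∀ {P Q : L} (f : P ⟶ Q), IsIso f → im f = Q
  incl_of_isIso : ∀ {P Q : L} (f : P ⟶ Q) (h : IsIso f), incl f = eqToHom (im_of_isIso f h)
  theta_surj : ∀ γ : Γ, ∃ e : S ⟶ S, IsIso e ∧ (show Γ from Θ.map e) = γ
  conjObj : Γ → L → L
  conjMor : ∀ (γ : Γ) (P : L), conjObj γ P ⟶ P
  conjMor_isIso : ∀ (γ : Γ) (P : L), IsIso (conjMor γ P)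
  theta_conjMor : ∀ (γ : Γ) (P : L), (show Γ from Θ.map (conjMor γ P)) = γ

variable {L : Type} [SmallCategory L] {Γ : Type} [Group Γ]

/-- The underlying type of the wide subcategory `L_H ⊆ L` of morphisms whose image under
`Θ̂` lies in the subgroup `H ≤ Γ`; this is the linking system of the subsystem of index
prime to `p` corresponding to `H`. -/
def LSub (_D : LinkingData L Γ) (_H : Subgroup Γ) : Type := L

instance LSub.category (D : LinkingData L Γ) (H : Subgroup Γ) : Category (LSub D H) where
  Hom X Y := {f : (show L from X) ⟶ (show L from Y) // (show Γ from D.Θ.map f) ∈ H}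
  id X := ⟨𝟙 (show L from X), by
    have : (show Γ from D.Θ.map (𝟙 (show L from X))) = 1 := by rw [D.Θ.map_id]; rfl
    rw [this]; exact H.one_mem⟩
  comp {X Y Z} f g := ⟨f.1 ≫ g.1, by
    have : (show Γ from D.Θ.map (f.1 ≫ g.1)) =
        (show Γ from D.Θ.map g.1) * (show Γ from D.Θ.map f.1) := by
      rw [D.Θ.map_comp]; rfl
    rw [this]; exact H.mul_mem g.2 f.2⟩
  id_comp f := by apply Subtype.ext; exact Category.id_comp f.1
  comp_id f := by apply Subtype.ext; exact Category.comp_id f.1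
  assoc f g h := by apply Subtype.ext; exact Category.assoc f.1 g.1 h.1

/-- The inclusion functor `ι : L_H ⥤ L`. -/
def LSub.ι (D : LinkingData L Γ) (H : Subgroup Γ) : LSub D H ⥤ L where
  obj X := X
  map f := f.1


lemma theta_inv (D : LinkingData L Γ) {A B : L} (g : A ⟶ B) [IsIso g] :
    (show Γ from D.Θ.map (inv g)) = (show Γ from D.Θ.map g)⁻¹ := by
  have h : D.Θ.map g ≫ D.Θ.map (inv g) = 𝟙 _ := by
    rw [← D.Θ.map_comp, IsIso.hom_inv_id, D.Θ.map_id]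
  have h2 : (show Γ from D.Θ.map (inv g)) * (show Γ from D.Θ.map g) = 1 := h
  exact eq_inv_of_mul_eq_one_left h2

lemma theta_comp (D : LinkingData L Γ) {A B C : L} (f : A ⟶ B) (g : B ⟶ C) :
    (show Γ from D.Θ.map (f ≫ g)) =
      (show Γ from D.Θ.map g) * (show Γ from D.Θ.map f) := by
  rw [D.Θ.map_comp]; rfl

/-- The functor `δ_P : G_H(P) ⥤ Γ/H` sending an object `(P^α, α)` to the
left coset `Θ̂(α)⁻¹H` is well defined and an equivalence of categories, where `Γ/H` is
viewed as a discrete category on the set of left cosets. -/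
theorem deltaP_equivalence
    (D : LinkingData L Γ) (H : Subgroup Γ) (P : L) :
    ∃ δ : ObjectProperty.FullSubcategory (fun X : StructuredArrow P (LSub.ι D H) => IsIso X.hom) ⥤
        Discrete (Γ ⧸ H),
      (∀ X : ObjectProperty.FullSubcategory (fun X : StructuredArrow P (LSub.ι D H) => IsIso X.hom),
        (δ.obj X).as = QuotientGroup.mk ((show Γ from D.Θ.map X.obj.hom))⁻¹) ∧
      δ.IsEquivalence := by
  classical
  set GP := ObjectProperty.FullSubcategory (fun X : StructuredArrow P (LSub.ι D H) => IsIso X.hom) with hGP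
  -- in each object, the arrow is iso
  have key : ∀ X Y : GP, (δobjQ : Γ ⧸ H) → True := fun _ _ _ => trivial
  -- coset equality along morphisms
  have coset_eq : ∀ {X Y : GP} (f : X ⟶ Y),
      (QuotientGroup.mk ((show Γ from D.Θ.map X.obj.hom))⁻¹ : Γ ⧸ H) =
        QuotientGroup.mk ((show Γ from D.Θ.map Y.obj.hom))⁻¹ := by
    intro X Y f
    have hw : X.obj.hom ≫ f.hom.right.1 = Y.obj.hom := by
      have := f.hom.w
      simpa [LSub.ι] using this
    rw [QuotientGroup.eq]
    have hmap : (show Γ from D.Θ.map Y.obj.hom) =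
        (show Γ from D.Θ.map f.hom.right.1) * (show Γ from D.Θ.map X.obj.hom) := by
      rw [← hw]; exact theta_comp D _ _
    rw [inv_inv, hmap]
    simpa using H.inv_mem f.hom.right.2
  refine ⟨{ obj := fun X => ⟨QuotientGroup.mk ((show Γ from D.Θ.map X.obj.hom))⁻¹⟩,
            map := fun {X Y} f => Discrete.eqToHom (coset_eq f),
            map_id := by intros; apply Subsingleton.elim,
            map_comp := by intros; apply Subsingleton.elim }, fun X => rfl, ?_⟩
  set δ : GP ⥤ Discrete (Γ ⧸ H) :=
    { obj := fun X => ⟨QuotientGroup.mk ((show Γ from D.Θ.map X.obj.hom))⁻¹⟩,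
      map := fun {X Y} f => Discrete.eqToHom (coset_eq f),
      map_id := by intros; apply Subsingleton.elim,
      map_comp := by intros; apply Subsingleton.elim } with hδ
  -- homs in GP are subsingletons
  have hsub : ∀ (X Y : GP) (f g : X ⟶ Y), f = g := by
    intro X Y f g
    have hX : IsIso X.obj.hom := X.property
    apply ObjectProperty.hom_ext
    apply StructuredArrow.hom_ext
    apply Subtype.ext
    have hf : X.obj.hom ≫ f.hom.right.1 = Y.obj.hom := by simpa [LSub.ι] using f.hom.w
    have hg : X.obj.hom ≫ g.hom.right.1 = Y.obj.hom := by simpa [LSub.ι] using g.hom.w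
    have := hf.trans hg.symm
    exact (cancel_epi X.obj.hom).mp this
  have hfaith : δ.Faithful := ⟨fun {X Y} f g _ => hsub X Y f g⟩
  have hfull : δ.Full := by
    constructor
    intro X Y h
    have heq : (QuotientGroup.mk ((show Γ from D.Θ.map X.obj.hom))⁻¹ : Γ ⧸ H) =
        QuotientGroup.mk ((show Γ from D.Θ.map Y.obj.hom))⁻¹ := by
      have := h.1.1; exact this
    have hX : IsIso X.obj.hom := X.property
    have hmem : (show Γ from D.Θ.map (inv X.obj.hom ≫ Y.obj.hom)) ∈ H := by
      rw [theta_comp, theta_inv]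
      have := (QuotientGroup.eq).mp heq
      rw [inv_inv] at this
      have h2 := H.inv_mem this
      simpa [mul_inv_rev] using h2
    refine ⟨ObjectProperty.homMk (StructuredArrow.homMk ⟨inv X.obj.hom (I := hX) ≫ Y.obj.hom, hmem⟩ ?_), Subsingleton.elim _ _⟩
    show X.obj.hom ≫ (inv X.obj.hom ≫ Y.obj.hom) = Y.obj.hom
    simp
  have hess : δ.EssSurj := by
    constructor
    intro q
    obtain ⟨γ, hγ⟩ := Quotient.exists_rep q.as
    have hi : IsIso (D.conjMor γ P) := D.conjMor_isIso γ P
    refine ⟨⟨StructuredArrow.mk (Y := (show LSub D H from D.conjObj γ P))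
        (show P ⟶ (LSub.ι D H).obj (show LSub D H from D.conjObj γ P) from
          inv (D.conjMor γ P) (I := hi)), ?_⟩, ?_⟩
    · show IsIso (inv (D.conjMor γ P)); infer_instance
    · refine ⟨Discrete.eqToIso ?_⟩
      have : (show Γ from D.Θ.map (inv (D.conjMor γ P))) = γ⁻¹ := by
        rw [theta_inv, D.theta_conjMor]
      show (QuotientGroup.mk ((show Γ from D.Θ.map (inv (D.conjMor γ P))))⁻¹ : Γ ⧸ H) = q.as
      rw [this, inv_inv, ← hγ]
  exact { }
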